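/- Let $F({\mathcal X}) = \frac{1}{k!}\sum_{\mathbf{x} \in {\mathcal X}^{(k)}} f(\mathbf{x})$ and $G({\mathcal X}) = \frac{1}{l!}\sum_{\mathbf{x}' \in {\mathcal X}^{(l)}} g(\mathbf{x}')$ be U-statistics of orders $k$ and $l$ on a finite set ${\mathcal X} \subset \mathbb{R}^d$, where $f, g$ are symmetric. Then the product $F \cdot G$ equals $\sum_{m=\max(k,l)}^{k+l} \sum_{\mathbf{z} \in {\mathcal X}^{(m)}} \frac{f(z_1,\ldots,z_k) g(z_{m-l+1},\ldots,z_m)}{(k+l-m)!\,(m-k)!\,(m-l)!}$; in particular, $F \cdot G$ is a finite sum of U-statistics of order at most $k+l$. -/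

import Mathlib

/-- The set of `m`-tuples of pairwise distinct elements of the finite set `X`. -/
def tuples {E : Type*} [DecidableEq E] (X : Finset E) (m : ℕ) : Finset (Fin m → E) :=
  (Fintype.piFinset fun _ : Fin m => X).filter Function.Injective

/-- The kernel `z ↦ f(z₁,…,z_k)·g(z_{m-l+1},…,z_m)` on `m`-tuples (and `0` if `m < k` or
`m < l`). -/
noncomputable def prodKernel {E : Type*} {k l : ℕ} (f : (Fin k → E) → ℝ)
    (g : (Fin l → E) → ℝ) (m : ℕ) (z : Fin m → E) : ℝ :=
  if h : k ≤ m ∧ l ≤ m then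
    f (fun i => z (Fin.castLE h.1 i)) *
      g (fun i => z ⟨m - l + i.val, by have h2 := h.2; have h3 := i.isLt; omega⟩)
  else 0

open Finset Function

section
variable {E : Type*} [DecidableEq E]

lemma mem_tuples {X : Finset E} {m : ℕ} {x : Fin m → E} :
    x ∈ tuples X m ↔ (∀ i, x i ∈ X) ∧ Function.Injective x := by
  simp [tuples, Fintype.mem_piFinset]

lemma card_tuples_self {S : Finset E} {a : ℕ} (h : S.card = a) :
    (tuples S a).card = a.factorial := by
  have : (tuples S a).card = Fintype.card (Fin a ↪ S) := by
    refine Finset.card_bij' (fun x hx => (⟨fun i => (⟨x i, (mem_tuples.1 hx).1 i⟩ : S),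
      fun i j hij => (mem_tuples.1 hx).2 (by simpa using congrArg Subtype.val hij)⟩ : Fin a ↪ S))
      (fun e _ => fun i => (e i : E)) (fun _ _ => Finset.mem_univ _) ?_ ?_ ?_
    · intro e _
      exact mem_tuples.2 ⟨fun i => (e i).2, fun i j hij => e.injective (Subtype.ext hij)⟩
    · intro x hx; rfl
    · intro e _; ext i; rfl
  rw [this, Fintype.card_embedding_eq, Fintype.card_fin, Fintype.card_coe, h,
    Nat.descFactorial_self]

/-- canonical value of a symmetric kernel on a finset -/
noncomputable def setKer {k : ℕ} (f : (Fin k → E) → ℝ) (A : Finset E) : ℝ :=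
  if h : A.card = k then f (fun i => (A.equivFin.symm (Fin.cast h.symm i) : E)) else 0

lemma exists_perm {k : ℕ} {x y : Fin k → E} (hx : Function.Injective x)
    (hy : Function.Injective y) (hxy : Finset.image x Finset.univ = Finset.image y Finset.univ) :
    ∃ σ : Equiv.Perm (Fin k), x = y ∘ σ := by
  set A : Finset E := Finset.image y Finset.univ with hA
  have hxmem : ∀ i, x i ∈ A := fun i => hxy ▸ (Finset.mem_image.2 ⟨i, mem_univ i, rfl⟩)
  have hymem : ∀ i, y i ∈ A := fun i => Finset.mem_image.2 ⟨i, mem_univ i, rfl⟩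
  have hcard : Fintype.card A = k := by
    rw [Fintype.card_coe, hA, Finset.card_image_of_injective _ hy, Finset.card_univ,
      Fintype.card_fin]
  have hbx : Function.Bijective (fun i => (⟨x i, hxmem i⟩ : A)) := by
    rw [Fintype.bijective_iff_injective_and_card]
    exact ⟨fun i j hij => hx (by simpa using congrArg Subtype.val hij), by simp [hcard]⟩
  have hby : Function.Bijective (fun i => (⟨y i, hymem i⟩ : A)) := by
    rw [Fintype.bijective_iff_injective_and_card]
    exact ⟨fun i j hij => hy (by simpa using congrArg Subtype.val hij), by simp [hcard]⟩
  let ex := Equiv.ofBijective _ hbx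
  let ey := Equiv.ofBijective _ hby
  refine ⟨ex.trans ey.symm, ?_⟩
  funext i
  have : (⟨x i, hxmem i⟩ : A) = ⟨y ((ex.trans ey.symm) i), hymem _⟩ := by
    show ex i = ey (ey.symm (ex i))
    rw [Equiv.apply_symm_apply]
  simpa using congrArg Subtype.val this

lemma setKer_eq {k : ℕ} {f : (Fin k → E) → ℝ} (hf : ∀ (σ : Equiv.Perm (Fin k)) x, f (x ∘ σ) = f x)
    {x : Fin k → E} (hx : Function.Injective x) {A : Finset E}
    (hA : Finset.image x Finset.univ = A) : f x = setKer f A := by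
  have hcard : A.card = k := by
    rw [← hA, Finset.card_image_of_injective _ hx, Finset.card_univ, Fintype.card_fin]
  rw [setKer, dif_pos hcard]
  set y : Fin k → E := fun i => (A.equivFin.symm (Fin.cast hcard.symm i) : E) with hy
  have hyinj : Function.Injective y := by
    intro i j hij
    have := A.equivFin.symm.injective (Subtype.ext hij)
    simpa [Fin.ext_iff] using this
  have hyim : Finset.image y Finset.univ = A := by
    apply Finset.eq_of_subset_of_card_le
    · intro a ha
      rcases Finset.mem_image.1 ha with ⟨i, _, rfl⟩
      exact (A.equivFin.symm _).2
    · rw [Finset.card_image_of_injective _ hyinj, Finset.card_univ, Fintype.card_fin, hcard]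
  obtain ⟨σ, hσ⟩ := exists_perm hx hyinj (hA.trans hyim.symm)
  rw [hσ, hf]

lemma image_mem_powersetCard {X : Finset E} {k : ℕ} {x : Fin k → E} (hx : x ∈ tuples X k) :
    Finset.image x Finset.univ ∈ X.powersetCard k := by
  obtain ⟨h1, h2⟩ := mem_tuples.1 hx
  rw [Finset.mem_powersetCard]
  constructor
  · intro a ha; rcases Finset.mem_image.1 ha with ⟨i, _, rfl⟩; exact h1 i
  · rw [Finset.card_image_of_injective _ h2, Finset.card_univ, Fintype.card_fin]

lemma fiber_image_eq {X : Finset E} {k : ℕ} {A : Finset E} (hA : A ∈ X.powersetCard k) :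
    (tuples X k).filter (fun x => Finset.image x Finset.univ = A) = tuples A k := by
  rw [Finset.mem_powersetCard] at hA
  ext x
  simp only [Finset.mem_filter, mem_tuples]
  constructor
  · rintro ⟨⟨h1, h2⟩, h3⟩
    exact ⟨fun i => h3 ▸ Finset.mem_image.2 ⟨i, mem_univ i, rfl⟩, h2⟩
  · rintro ⟨h1, h2⟩
    refine ⟨⟨fun i => hA.1 (h1 i), h2⟩, ?_⟩
    apply Finset.eq_of_subset_of_card_le
    · intro a ha; rcases Finset.mem_image.1 ha with ⟨i, _, rfl⟩; exact h1 i
    · rw [Finset.card_image_of_injective _ h2, Finset.card_univ, Fintype.card_fin, hA.2]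

lemma sum_tuples_eq {X : Finset E} {k : ℕ} (f : (Fin k → E) → ℝ)
    (hf : ∀ (σ : Equiv.Perm (Fin k)) x, f (x ∘ σ) = f x) :
    ∑ x ∈ tuples X k, f x = ∑ A ∈ X.powersetCard k, (k.factorial : ℝ) * setKer f A := by
  rw [← Finset.sum_fiberwise_of_maps_to (fun x hx => image_mem_powersetCard hx) f]
  refine Finset.sum_congr rfl fun A hA => ?_
  have hcard : A.card = k := (Finset.mem_powersetCard.1 hA).2
  rw [fiber_image_eq hA]
  have hker : ∀ x ∈ tuples A k, f x = setKer f A := by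
    intro x hx
    have hx := mem_tuples.1 hx
    refine setKer_eq hf hx.2 ?_
    apply Finset.eq_of_subset_of_card_le
    · intro a ha; rcases Finset.mem_image.1 ha with ⟨i, _, rfl⟩; exact hx.1 i
    · rw [Finset.card_image_of_injective _ hx.2, Finset.card_univ, Fintype.card_fin, hcard]
  rw [Finset.sum_congr rfl hker, Finset.sum_const, card_tuples_self hcard, nsmul_eq_mul]

/-- The pair of finsets (first-k image, last-l image) of an m-tuple. -/
def keyPair (k l : ℕ) {m : ℕ} (hk : k ≤ m) (hl : l ≤ m) (z : Fin m → E) :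
    Finset E × Finset E :=
  (Finset.image (fun i : Fin k => z (Fin.castLE hk i)) Finset.univ,
   Finset.image (fun i : Fin l => z ⟨m - l + i.val, by have := i.isLt; omega⟩) Finset.univ)

set_option maxHeartbeats 1000000 in
lemma card_fiber_pair {X A B : Finset E} {k l m : ℕ} (hk : k ≤ m) (hl : l ≤ m) (hm : m ≤ k + l)
    (hAX : A ⊆ X) (hAc : A.card = k) (hBX : B ⊆ X) (hBc : B.card = l)
    (hAB : (A ∪ B).card = m) :
    ((tuples X m).filter (fun z => keyPair k l hk hl z = (A, B))).card
      = (m - l).factorial * ((k + l - m).factorial * (m - k).factorial) := by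
  have h1 : (A \ B).card = m - l := by
    rw [← Finset.union_sdiff_right, Finset.card_sdiff_of_subset Finset.subset_union_right, hAB, hBc]
  have h2 : (B \ A).card = m - k := by
    rw [← Finset.union_sdiff_left, Finset.card_sdiff_of_subset Finset.subset_union_left, hAB, hAc]
  have h3 : (A ∩ B).card = k + l - m := by
    have := Finset.card_inter_add_card_union A B
    omega
  have hT : (m - l).factorial * ((k + l - m).factorial * (m - k).factorial)
      = ((tuples (A \ B) (m - l)) ×ˢ ((tuples (A ∩ B) (k + l - m)) ×ˢ
          (tuples (B \ A) (m - k)))).card := by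
    rw [Finset.card_product, Finset.card_product, card_tuples_self h1, card_tuples_self h3,
      card_tuples_self h2]
  rw [hT]
  refine Finset.card_nbij'
    (fun z => (fun i : Fin (m - l) => z ⟨i.val, by have := i.isLt; omega⟩,
      (fun i : Fin (k + l - m) => z ⟨m - l + i.val, by have := i.isLt; omega⟩,
       fun i : Fin (m - k) => z ⟨k + i.val, by have := i.isLt; omega⟩)))
    (fun t => fun j : Fin m =>
      if h1 : j.val < m - l then t.1 ⟨j.val, h1⟩
      else if h2 : j.val < k then t.2.1 ⟨j.val - (m - l), by have := j.isLt; omega⟩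
      else t.2.2 ⟨j.val - k, by have := j.isLt; omega⟩)
    ?_ ?_ ?_ ?_
  · -- forward maps to product
    intro z hz
    rw [Finset.mem_coe, Finset.mem_filter] at hz
    obtain ⟨hzt, hzk⟩ := hz
    obtain ⟨hzX, hzinj⟩ := mem_tuples.1 hzt
    have hfst := congrArg Prod.fst hzk
    have hsnd := congrArg Prod.snd hzk
    simp only [keyPair] at hfst hsnd
    have hzA : ∀ j : Fin m, j.val < k → z j ∈ A := by
      intro j hj
      rw [← hfst]
      exact Finset.mem_image.2 ⟨⟨j.val, hj⟩, mem_univ _, congrArg z (Fin.ext rfl)⟩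
    have hzB : ∀ j : Fin m, m - l ≤ j.val → z j ∈ B := by
      intro j hj
      rw [← hsnd]
      refine Finset.mem_image.2 ⟨⟨j.val - (m - l), by have := j.isLt; omega⟩, mem_univ _, ?_⟩
      exact congrArg z (Fin.ext (show m - l + (j.val - (m - l)) = j.val by omega))
    have hAz : ∀ j : Fin m, z j ∈ A → j.val < k := by
      intro j hj
      rw [← hfst] at hj
      rcases Finset.mem_image.1 hj with ⟨i, _, hi⟩
      have h' : (i.val : ℕ) = j.val := congrArg Fin.val (hzinj hi)
      have := i.isLt
      omega
    have hBz : ∀ j : Fin m, z j ∈ B → m - l ≤ j.val := by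
      intro j hj
      rw [← hsnd] at hj
      rcases Finset.mem_image.1 hj with ⟨i, _, hi⟩
      have h' : m - l + i.val = j.val := congrArg Fin.val (hzinj hi)
      omega
    refine Finset.mem_product.2 ⟨?_, Finset.mem_product.2 ⟨?_, ?_⟩⟩
    · refine mem_tuples.2 ⟨fun i => ?_, fun i j hij => ?_⟩
      · rw [Finset.mem_sdiff]
        have hi := i.isLt
        refine ⟨hzA _ (show i.val < k by omega), fun hB => ?_⟩
        have h' : m - l ≤ i.val := hBz _ hB
        omega
      · exact Fin.ext (show (i.val : ℕ) = j.val by simpa using hzinj hij)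
    · refine mem_tuples.2 ⟨fun i => ?_, fun i j hij => ?_⟩
      · have hi := i.isLt
        rw [Finset.mem_inter]
        exact ⟨hzA _ (show m - l + i.val < k by omega),
          hzB _ (show m - l ≤ m - l + i.val by omega)⟩
      · have h' : m - l + i.val = m - l + j.val := congrArg Fin.val (hzinj hij)
        exact Fin.ext (by omega)
    · refine mem_tuples.2 ⟨fun i => ?_, fun i j hij => ?_⟩
      · have hi := i.isLt
        rw [Finset.mem_sdiff]
        refine ⟨hzB _ (show m - l ≤ k + i.val by omega), fun hA' => ?_⟩
        have h' : k + i.val < k := hAz _ hA'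
        omega
      · have h' : k + i.val = k + j.val := congrArg Fin.val (hzinj hij)
        exact Fin.ext (by omega)
  · -- backward maps to fiber
    intro t ht
    rw [Finset.mem_coe, Finset.mem_product, Finset.mem_product] at ht
    obtain ⟨ht1, ht2, ht3⟩ := ht
    obtain ⟨hu, huinj⟩ := mem_tuples.1 ht1
    obtain ⟨hv, hvinj⟩ := mem_tuples.1 ht2
    obtain ⟨hw, hwinj⟩ := mem_tuples.1 ht3
    set zf : Fin m → E := fun j : Fin m =>
      if h1 : j.val < m - l then t.1 ⟨j.val, h1⟩
      else if h2 : j.val < k then t.2.1 ⟨j.val - (m - l), by have := j.isLt; omega⟩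
      else t.2.2 ⟨j.val - k, by have := j.isLt; omega⟩ with hzf
    have eq1 : ∀ (j : Fin m) (h : j.val < m - l), zf j = t.1 ⟨j.val, h⟩ := by
      intro j h; rw [hzf]; simp only [dif_pos h]
    have eq2 : ∀ (j : Fin m) (h : ¬ j.val < m - l) (h' : j.val < k),
        zf j = t.2.1 ⟨j.val - (m - l), by have := j.isLt; omega⟩ := by
      intro j h h'; rw [hzf]; simp only [dif_neg h, dif_pos h']
    have eq3 : ∀ (j : Fin m) (h : ¬ j.val < m - l) (h' : ¬ j.val < k),
        zf j = t.2.2 ⟨j.val - k, by have := j.isLt; omega⟩ := by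
      intro j h h'; rw [hzf]; simp only [dif_neg h, dif_neg h']
    have hval : ∀ j : Fin m, (j.val < m - l → zf j ∈ A \ B) ∧
        (m - l ≤ j.val → j.val < k → zf j ∈ A ∩ B) ∧ (k ≤ j.val → zf j ∈ B \ A) := by
      intro j
      refine ⟨fun h => ?_, fun h h' => ?_, fun h => ?_⟩
      · rw [eq1 j h]; exact hu _
      · rw [eq2 j (by omega) h']; exact hv _
      · rw [eq3 j (by omega) (by omega)]; exact hw _
    have hinj : Function.Injective zf := by
      intro a b hab
      have hvA := hval a
      have hvB := hval b
      by_cases ha1 : a.val < m - l <;> by_cases hb1 : b.val < m - l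
      · have h' : (a.val : ℕ) = b.val := by
          simpa using huinj (a₁ := ⟨a.val, ha1⟩) (a₂ := ⟨b.val, hb1⟩)
            (by rw [← eq1 a ha1, ← eq1 b hb1]; exact hab)
        exact Fin.ext h'
      · exfalso
        have saB : zf a ∉ B := (Finset.mem_sdiff.1 (hvA.1 ha1)).2
        by_cases hb2 : b.val < k
        · exact saB (by rw [hab]; exact (Finset.mem_inter.1 (hvB.2.1 (by omega) hb2)).2)
        · exact saB (by rw [hab]; exact (Finset.mem_sdiff.1 (hvB.2.2 (by omega))).1)
      · exfalso
        have sbB : zf b ∉ B := (Finset.mem_sdiff.1 (hvB.1 hb1)).2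
        by_cases ha2 : a.val < k
        · exact sbB (by rw [← hab]; exact (Finset.mem_inter.1 (hvA.2.1 (by omega) ha2)).2)
        · exact sbB (by rw [← hab]; exact (Finset.mem_sdiff.1 (hvA.2.2 (by omega))).1)
      · by_cases ha2 : a.val < k <;> by_cases hb2 : b.val < k
        · have h' : a.val - (m - l) = b.val - (m - l) := congrArg Fin.val (hvinj
            (a₁ := ⟨a.val - (m - l), by have := a.isLt; omega⟩)
            (a₂ := ⟨b.val - (m - l), by have := b.isLt; omega⟩)
            (by rw [← eq2 a ha1 ha2, ← eq2 b hb1 hb2]; exact hab))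
          exact Fin.ext (by omega)
        · exfalso
          have saA : zf a ∈ A := (Finset.mem_inter.1 (hvA.2.1 (by omega) ha2)).1
          have sbA : zf b ∉ A := (Finset.mem_sdiff.1 (hvB.2.2 (by omega))).2
          rw [hab] at saA; exact sbA saA
        · exfalso
          have saA : zf a ∉ A := (Finset.mem_sdiff.1 (hvA.2.2 (by omega))).2
          have sbA : zf b ∈ A := (Finset.mem_inter.1 (hvB.2.1 (by omega) hb2)).1
          rw [← hab] at sbA; exact saA sbA
        · have h' : a.val - k = b.val - k := congrArg Fin.val (hwinj
            (a₁ := ⟨a.val - k, by have := a.isLt; omega⟩)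
            (a₂ := ⟨b.val - k, by have := b.isLt; omega⟩)
            (by rw [← eq3 a ha1 ha2, ← eq3 b hb1 hb2]; exact hab))
          exact Fin.ext (by omega)
    refine Finset.mem_filter.2 ⟨mem_tuples.2 ⟨fun j => ?_, hinj⟩, ?_⟩
    · have hv' := hval j
      by_cases hj1 : j.val < m - l
      · exact hAX (Finset.mem_sdiff.1 (hv'.1 hj1)).1
      · by_cases hj2 : j.val < k
        · exact hAX (Finset.mem_inter.1 (hv'.2.1 (by omega) hj2)).1
        · exact hBX (Finset.mem_sdiff.1 (hv'.2.2 (by omega))).1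
    · -- keyPair zf = (A, B)
      have hfst : Finset.image (fun i : Fin k => zf (Fin.castLE hk i)) Finset.univ = A := by
        apply Finset.eq_of_subset_of_card_le
        · intro a ha
          rcases Finset.mem_image.1 ha with ⟨i, _, rfl⟩
          have hv' := hval (Fin.castLE hk i)
          by_cases hj1 : (Fin.castLE hk i).val < m - l
          · exact (Finset.mem_sdiff.1 (hv'.1 hj1)).1
          · exact (Finset.mem_inter.1 (hv'.2.1 (by omega) i.isLt)).1
        · have hinj1 : Function.Injective (fun i : Fin k => zf (Fin.castLE hk i)) :=
            fun i j hij => Fin.castLE_injective hk (hinj hij)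
          have hcard1 : (Finset.image (fun i : Fin k => zf (Fin.castLE hk i))
              Finset.univ).card = (Finset.univ : Finset (Fin k)).card :=
            Finset.card_image_of_injective _ hinj1
          have huniv1 : (Finset.univ : Finset (Fin k)).card = k := by simp
          omega
      have hsnd : Finset.image
          (fun i : Fin l => zf ⟨m - l + i.val, by have := i.isLt; omega⟩) Finset.univ = B := by
        apply Finset.eq_of_subset_of_card_le
        · intro a ha
          rcases Finset.mem_image.1 ha with ⟨i, _, rfl⟩
          have hi := i.isLt
          have hv' := hval (⟨m - l + i.val, by omega⟩ : Fin m)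
          by_cases hj2 : m - l + i.val < k
          · exact (Finset.mem_inter.1 (hv'.2.1
              (show m - l ≤ m - l + i.val by omega) hj2)).2
          · exact (Finset.mem_sdiff.1 (hv'.2.2 (show k ≤ m - l + i.val by omega))).1
        · have hinj2 : Function.Injective
              (fun i : Fin l => zf ⟨m - l + i.val, by have := i.isLt; omega⟩) := by
            intro i j hij
            have h' : m - l + i.val = m - l + j.val := congrArg Fin.val (hinj hij)
            exact Fin.ext (by omega)
          have hcard2 : (Finset.image (fun i : Fin l =>
              zf ⟨m - l + i.val, by have := i.isLt; omega⟩) Finset.univ).card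
              = (Finset.univ : Finset (Fin l)).card :=
            Finset.card_image_of_injective _ hinj2
          have huniv2 : (Finset.univ : Finset (Fin l)).card = l := by simp
          omega
      rw [keyPair, Prod.mk.injEq]
      exact ⟨hfst, hsnd⟩
  · -- left inverse
    intro z hz
    funext j
    simp only []
    by_cases hj1 : j.val < m - l
    · rw [dif_pos hj1]
    · by_cases hj2 : j.val < k
      · rw [dif_neg hj1, dif_pos hj2]
        exact congrArg z (Fin.ext (show m - l + (j.val - (m - l)) = j.val by omega))
      · rw [dif_neg hj1, dif_neg hj2]
        exact congrArg z (Fin.ext (show k + (j.val - k) = j.val by omega))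
  · -- right inverse
    intro t ht
    refine Prod.ext ?_ (Prod.ext ?_ ?_)
    · funext i
      simp only []
      rw [dif_pos (show (i.val : ℕ) < m - l from i.isLt)]
    · funext i
      have hi := i.isLt
      simp only []
      rw [dif_neg (show ¬ m - l + i.val < m - l by omega),
        dif_pos (show m - l + i.val < k by omega)]
      exact congrArg t.2.1 (Fin.ext (show m - l + i.val - (m - l) = i.val by omega))
    · funext i
      have hi := i.isLt
      simp only []
      rw [dif_neg (show ¬ k + i.val < m - l by omega), dif_neg (show ¬ k + i.val < k by omega)]
      exact congrArg t.2.2 (Fin.ext (show k + i.val - k = i.val by omega))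

lemma prodKernel_eq {k l m : ℕ} (hk : k ≤ m) (hl : l ≤ m)
    (f : (Fin k → E) → ℝ) (g : (Fin l → E) → ℝ) (z : Fin m → E) :
    prodKernel f g m z = f (fun i => z (Fin.castLE hk i)) *
      g (fun i => z ⟨m - l + i.val, by have := i.isLt; omega⟩) := by
  rw [prodKernel, dif_pos (⟨hk, hl⟩ : k ≤ m ∧ l ≤ m)]

lemma keyPair_maps_to {X : Finset E} {k l m : ℕ} (hk : k ≤ m) (hl : l ≤ m) (hm : m ≤ k + l)
    {z : Fin m → E} (hz : z ∈ tuples X m) :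
    keyPair k l hk hl z ∈ ((X.powersetCard k) ×ˢ (X.powersetCard l)).filter
      (fun p => (p.1 ∪ p.2).card = m) := by
  obtain ⟨hzX, hzinj⟩ := mem_tuples.1 hz
  have hinj1 : Function.Injective (fun i : Fin k => z (Fin.castLE hk i)) :=
    fun i j hij => Fin.castLE_injective hk (hzinj hij)
  have hinj2 : Function.Injective
      (fun i : Fin l => z ⟨m - l + i.val, by have := i.isLt; omega⟩) := by
    intro i j hij
    have h' : m - l + i.val = m - l + j.val := by simpa using hzinj hij
    exact Fin.ext (by omega)
  refine Finset.mem_filter.2 ⟨Finset.mem_product.2 ⟨?_, ?_⟩, ?_⟩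
  · rw [Finset.mem_powersetCard]
    refine ⟨fun a ha => ?_, ?_⟩
    · rcases Finset.mem_image.1 ha with ⟨i, _, rfl⟩; exact hzX _
    · show (Finset.image (fun i : Fin k => z (Fin.castLE hk i)) Finset.univ).card = k
      rw [Finset.card_image_of_injective _ hinj1, Finset.card_univ, Fintype.card_fin]
  · rw [Finset.mem_powersetCard]
    refine ⟨fun a ha => ?_, ?_⟩
    · rcases Finset.mem_image.1 ha with ⟨i, _, rfl⟩; exact hzX _
    · show (Finset.image (fun i : Fin l =>
          z ⟨m - l + i.val, by have := i.isLt; omega⟩) Finset.univ).card = l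
      rw [Finset.card_image_of_injective _ hinj2, Finset.card_univ, Fintype.card_fin]
  · have hunion : (keyPair k l hk hl z).1 ∪ (keyPair k l hk hl z).2
        = Finset.image z Finset.univ := by
      apply Finset.Subset.antisymm
      · intro a ha
        rcases Finset.mem_union.1 ha with h | h <;>
          · rcases Finset.mem_image.1 h with ⟨i, _, rfl⟩
            exact Finset.mem_image.2 ⟨_, mem_univ _, rfl⟩
      · intro a ha
        rcases Finset.mem_image.1 ha with ⟨j, _, rfl⟩
        by_cases hj : j.val < k
        · refine Finset.mem_union_left _ (Finset.mem_image.2 ⟨⟨j.val, hj⟩, mem_univ _, ?_⟩)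
          exact congrArg z (Fin.ext rfl)
        · refine Finset.mem_union_right _ (Finset.mem_image.2
            ⟨⟨j.val - (m - l), by have := j.isLt; omega⟩, mem_univ _, ?_⟩)
          exact congrArg z (Fin.ext (show m - l + (j.val - (m - l)) = j.val by
            have := j.isLt; omega))
    rw [hunion, Finset.card_image_of_injective _ hzinj, Finset.card_univ, Fintype.card_fin]

lemma sum_tuples_prod {X : Finset E} {k l m : ℕ} (hk : k ≤ m) (hl : l ≤ m) (hm : m ≤ k + l)
    (f : (Fin k → E) → ℝ) (g : (Fin l → E) → ℝ)
    (hf : ∀ (σ : Equiv.Perm (Fin k)) x, f (x ∘ σ) = f x)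
    (hg : ∀ (σ : Equiv.Perm (Fin l)) x, g (x ∘ σ) = g x) :
    ∑ z ∈ tuples X m, prodKernel f g m z
      = ∑ p ∈ ((X.powersetCard k) ×ˢ (X.powersetCard l)).filter
          (fun p => (p.1 ∪ p.2).card = m),
        ((m - l).factorial * ((k + l - m).factorial * (m - k).factorial) : ℝ)
          * (setKer f p.1 * setKer g p.2) := by
  rw [← Finset.sum_fiberwise_of_maps_to (g := keyPair k l hk hl)
    (fun z hz => keyPair_maps_to hk hl hm hz) (prodKernel f g m)]
  refine Finset.sum_congr rfl fun p hp => ?_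
  obtain ⟨hp', hpc⟩ := Finset.mem_filter.1 hp
  obtain ⟨hpA, hpB⟩ := Finset.mem_product.1 hp'
  rw [Finset.mem_powersetCard] at hpA hpB
  have hterm : ∀ z ∈ (tuples X m).filter (fun z => keyPair k l hk hl z = p),
      prodKernel f g m z = setKer f p.1 * setKer g p.2 := by
    intro z hz
    obtain ⟨hzt, hzk⟩ := Finset.mem_filter.1 hz
    obtain ⟨hzX, hzinj⟩ := mem_tuples.1 hzt
    have hinj1 : Function.Injective (fun i : Fin k => z (Fin.castLE hk i)) :=
      fun i j hij => Fin.castLE_injective hk (hzinj hij)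
    have hinj2 : Function.Injective
        (fun i : Fin l => z ⟨m - l + i.val, by have := i.isLt; omega⟩) := by
      intro i j hij
      have h' : m - l + i.val = m - l + j.val := by simpa using hzinj hij
      exact Fin.ext (by omega)
    have hfst : Finset.image (fun i : Fin k => z (Fin.castLE hk i)) Finset.univ = p.1 :=
      congrArg Prod.fst hzk
    have hsnd : Finset.image
        (fun i : Fin l => z ⟨m - l + i.val, by have := i.isLt; omega⟩) Finset.univ = p.2 :=
      congrArg Prod.snd hzk
    rw [prodKernel_eq hk hl, setKer_eq hf hinj1 hfst, setKer_eq hg hinj2 hsnd]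
  rw [Finset.sum_congr rfl hterm, Finset.sum_const]
  have hcard := card_fiber_pair (X := X) hk hl hm hpA.1 hpA.2 hpB.1 hpB.2 hpc
  have hp2 : ((tuples X m).filter (fun z => keyPair k l hk hl z = p))
      = ((tuples X m).filter (fun z => keyPair k l hk hl z = (p.1, p.2))) := by
    simp
  rw [hp2, hcard, nsmul_eq_mul]
  push_cast
  ring

end

/-- Product formula for U-statistics: the product of U-statistics of orders `k` and `l` with
symmetric kernels `f`, `g` equals
`∑_{m=max(k,l)}^{k+l} ∑_{z ∈ X^{(m)}} f(z₁,…,z_k) g(z_{m-l+1},…,z_m) / ((k+l-m)!(m-k)!(m-l)!)`;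
in particular it is a finite sum of U-statistics of order at most `k + l`. -/
theorem stmt6 (d k l : ℕ) [DecidableEq (EuclideanSpace ℝ (Fin d))]
    (f : (Fin k → EuclideanSpace ℝ (Fin d)) → ℝ) (g : (Fin l → EuclideanSpace ℝ (Fin d)) → ℝ)
    (hf : ∀ (σ : Equiv.Perm (Fin k)) x, f (x ∘ σ) = f x)
    (hg : ∀ (σ : Equiv.Perm (Fin l)) x, g (x ∘ σ) = g x)
    (X : Finset (EuclideanSpace ℝ (Fin d))) :
    ((1 : ℝ) / k.factorial * ∑ x ∈ tuples X k, f x) *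
        ((1 : ℝ) / l.factorial * ∑ x ∈ tuples X l, g x) =
      ∑ m ∈ Finset.Icc (max k l) (k + l),
        (∑ z ∈ tuples X m, prodKernel f g m z) /
          ((k + l - m).factorial * (m - k).factorial * (m - l).factorial) := by
  have hk0 : (k.factorial : ℝ) ≠ 0 := Nat.cast_ne_zero.2 k.factorial_ne_zero
  have hl0 : (l.factorial : ℝ) ≠ 0 := Nat.cast_ne_zero.2 l.factorial_ne_zero
  have hLHS : ((1 : ℝ) / k.factorial * ∑ x ∈ tuples X k, f x) *
      ((1 : ℝ) / l.factorial * ∑ x ∈ tuples X l, g x)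
      = ∑ p ∈ (X.powersetCard k) ×ˢ (X.powersetCard l), setKer f p.1 * setKer g p.2 := by
    rw [sum_tuples_eq f hf, sum_tuples_eq g hg, ← Finset.mul_sum, ← Finset.mul_sum,
      Finset.sum_product]
    rw [show ((1 : ℝ) / k.factorial * ((k.factorial : ℝ) * ∑ A ∈ X.powersetCard k, setKer f A))
        = ∑ A ∈ X.powersetCard k, setKer f A by field_simp]
    rw [show ((1 : ℝ) / l.factorial * ((l.factorial : ℝ) * ∑ B ∈ X.powersetCard l, setKer g B))
        = ∑ B ∈ X.powersetCard l, setKer g B by field_simp]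
    rw [Finset.sum_mul_sum]
  have hRHS : ∀ m ∈ Finset.Icc (max k l) (k + l),
      (∑ z ∈ tuples X m, prodKernel f g m z) /
        ((k + l - m).factorial * (m - k).factorial * (m - l).factorial : ℝ)
      = ∑ p ∈ ((X.powersetCard k) ×ˢ (X.powersetCard l)).filter
          (fun p => (p.1 ∪ p.2).card = m), setKer f p.1 * setKer g p.2 := by
    intro m hm
    obtain ⟨hm1, hm2⟩ := Finset.mem_Icc.1 hm
    have hk' : k ≤ m := le_trans (le_max_left _ _) hm1
    have hl' : l ≤ m := le_trans (le_max_right _ _) hm1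
    rw [sum_tuples_prod hk' hl' hm2 f g hf hg, Finset.sum_div]
    refine Finset.sum_congr rfl fun p hp => ?_
    have h1 : ((k + l - m).factorial : ℝ) ≠ 0 := Nat.cast_ne_zero.2 (k + l - m).factorial_ne_zero
    have h2 : ((m - k).factorial : ℝ) ≠ 0 := Nat.cast_ne_zero.2 (m - k).factorial_ne_zero
    have h3 : ((m - l).factorial : ℝ) ≠ 0 := Nat.cast_ne_zero.2 (m - l).factorial_ne_zero
    field_simp
  rw [hLHS, Finset.sum_congr rfl hRHS]
  rw [Finset.sum_fiberwise_of_maps_to (g := fun p : Finset _ × Finset _ => (p.1 ∪ p.2).card)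
    (fun p hp => ?_) (fun p => setKer f p.1 * setKer g p.2)]
  obtain ⟨hpA, hpB⟩ := Finset.mem_product.1 hp
  rw [Finset.mem_powersetCard] at hpA hpB
  rw [Finset.mem_Icc]
  constructor
  · refine max_le ?_ ?_
    · rw [← hpA.2]; exact Finset.card_le_card Finset.subset_union_left
    · rw [← hpB.2]; exact Finset.card_le_card Finset.subset_union_right
  · calc (p.1 ∪ p.2).card ≤ p.1.card + p.2.card := Finset.card_union_le _ _
      _ = k + l := by rw [hpA.2, hpB.2]
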